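/- Let M be a locally compact metric space with a continuous flow, and let 𝔐 be a set of compact minimal sets of the flow such that for every X ∈ 𝔐 and ε > 0, there exists Y ∈ 𝔐 with Y ≠ X and Y ⊆ B(X, ε). Then 𝔐 is dense in itself with respect to the Hausdorff metric, i.e., every X ∈ 𝔐 is a d_H-limit of elements of 𝔐 \ {X}. -/
import Mathlib


open Set Filter Metric Topology TopologicalSpace

variable {M : Type*} [MetricSpace M]

/-- The full orbit of a point under a flow. -/
def orbit (ϕ : Flow ℝ M) (x : M) : Set M := Set.range fun t => ϕ t x

/-- The positive (forward) half orbit. -/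
def posOrbit (ϕ : Flow ℝ M) (x : M) : Set M := {y | ∃ t : ℝ, 0 ≤ t ∧ ϕ t x = y}

/-- The negative (backward) half orbit. -/
def negOrbit (ϕ : Flow ℝ M) (x : M) : Set M := {y | ∃ t : ℝ, t ≤ 0 ∧ ϕ t x = y}

/-- Positive orbital saturation of a set. -/
def posSat (ϕ : Flow ℝ M) (s : Set M) : Set M := ⋃ x ∈ s, posOrbit ϕ x

/-- The ω-limit set of a point. -/
def omegaSet (ϕ : Flow ℝ M) (x : M) : Set M :=
  ⋂ t : ℝ, closure {y | ∃ s : ℝ, t ≤ s ∧ ϕ s x = y}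

/-- The α-limit set of a point. -/
def alphaSet (ϕ : Flow ℝ M) (x : M) : Set M :=
  ⋂ t : ℝ, closure {y | ∃ s : ℝ, s ≤ t ∧ ϕ s x = y}

/-- A set is invariant under the flow. -/
def flowInv (ϕ : Flow ℝ M) (s : Set M) : Prop := ∀ t : ℝ, ϕ t '' s = s

/-- Stability of a set: every neighbourhood contains a positively invariant neighbourhood. -/
def Stable (ϕ : Flow ℝ M) (K : Set M) : Prop :=
  ∀ U ∈ 𝓝ˢ K, ∃ V ∈ 𝓝ˢ K, posSat ϕ V ⊆ U

/-- The set of points whose ω-limit set is nonempty and contained in `K`. -/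
def Bplus (ϕ : Flow ℝ M) (K : Set M) : Set M :=
  {x | (omegaSet ϕ x).Nonempty ∧ omegaSet ϕ x ⊆ K}

/-- `K` is an attractor: stable and `B⁺(K)` is a neighbourhood of `K`. -/
def IsAttractor (ϕ : Flow ℝ M) (K : Set M) : Prop :=
  Stable ϕ K ∧ Bplus ϕ K ∈ 𝓝ˢ K

/-- `K` is a repeller: an attractor for the time-reversed flow. -/
def IsRepeller (ϕ : Flow ℝ M) (K : Set M) : Prop :=
  IsAttractor ϕ.reverse K

/-- A minimal set of the flow. -/
def IsMinimalSet (ϕ : Flow ℝ M) (s : Set M) : Prop :=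
  s.Nonempty ∧ IsClosed s ∧ flowInv ϕ s ∧
    ∀ t, t ⊆ s → t.Nonempty → IsClosed t → flowInv ϕ t → t = s

/-- `K` is stagnant. -/
def Stagnant (ϕ : Flow ℝ M) (K : Set M) : Prop :=
  ∃ x ∉ K, ∃ y ∉ K, (alphaSet ϕ x).Nonempty ∧ alphaSet ϕ x ⊆ K ∧
    (omegaSet ϕ y).Nonempty ∧ omegaSet ϕ y ⊆ K

/-- `K` is isolated from minimal sets. -/
def IsolatedFromMinimals (ϕ : Flow ℝ M) (K : Set M) : Prop :=
  ∃ U ∈ 𝓝ˢ K, ∀ s, s ⊆ U \ K → ¬ IsMinimalSet ϕ s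

/-- `x` is a periodic point with minimal period `p`: the set of periods is `pℤ`. -/
def MinPeriod (ϕ : Flow ℝ M) (x : M) (p : ℝ) : Prop :=
  0 < p ∧ {t : ℝ | ϕ t x = x} = {t : ℝ | ∃ n : ℤ, t = n * p}

/-- `x` is an equilibrium. -/
def IsEquilibrium (ϕ : Flow ℝ M) (x : M) : Prop := ∀ t : ℝ, ϕ t x = x


lemma orbit_invariant_img (ϕ : Flow ℝ M) (x : M) (t : ℝ) :
    ϕ t '' orbit ϕ x = orbit ϕ x := by
  ext y
  constructor
  · rintro ⟨z, ⟨s, rfl⟩, rfl⟩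
    exact ⟨t + s, by simp only [ϕ.map_add]⟩
  · rintro ⟨s, rfl⟩
    exact ⟨ϕ (s - t) x, ⟨s - t, rfl⟩, by rw [← ϕ.map_add]; ring_nf⟩

lemma closure_orbit_eq (ϕ : Flow ℝ M) {X : Set M} (hX : IsMinimalSet ϕ X)
    {x : M} (hx : x ∈ X) : closure (orbit ϕ x) = X := by
  obtain ⟨hne, hcl, hinv, hmin⟩ := hX
  refine hmin _ ?_ ⟨x, subset_closure ⟨0, ϕ.map_zero_apply x⟩⟩ isClosed_closure ?_
  · refine closure_minimal ?_ hcl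
    rintro y ⟨t, rfl⟩
    rw [← hinv t]
    exact ⟨x, hx, rfl⟩
  · intro t
    rw [show ϕ t = ⇑(ϕ.toHomeomorph t) from rfl, (ϕ.toHomeomorph t).image_closure]
    rw [show ⇑(ϕ.toHomeomorph t) = ϕ t from rfl, orbit_invariant_img]

theorem metric_dense_implies_hausdorff_dense
    {M : Type*} [MetricSpace M] [LocallyCompactSpace M]
    (ϕ : Flow ℝ M) (𝔐 : Set (Set M))
    (hmin : ∀ X ∈ 𝔐, IsCompact X ∧ IsMinimalSet ϕ X)
    (hd : ∀ X ∈ 𝔐, ∀ ε > (0 : ℝ), ∃ Y ∈ 𝔐, Y ≠ X ∧ Y ⊆ Metric.thickening ε X) :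
    ∀ X ∈ 𝔐, ∀ ε > (0 : ℝ), ∃ Y ∈ 𝔐, Y ≠ X ∧ Metric.hausdorffDist Y X < ε := by
  intro X hX ε hε
  obtain ⟨hXc, hXmin⟩ := hmin X hX
  -- Step 1: finitely many times whose translates are ε/4-dense uniformly
  set V : ℝ → Set (M × M) := fun t => {p : M × M | dist (ϕ t p.1) p.2 < ε / 4} with hV
  have hVopen : ∀ t, IsOpen (V t) := by
    intro t
    have : Continuous fun p : M × M => dist (ϕ t p.1) p.2 :=
      ((ϕ.continuous_toFun t).comp continuous_fst).dist continuous_snd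
    exact isOpen_lt this continuous_const
  have hcover : X ×ˢ X ⊆ ⋃ t : ℝ, V t := by
    rintro ⟨x, z⟩ ⟨hx, hz⟩
    have hzc : z ∈ closure (orbit ϕ x) := (closure_orbit_eq ϕ hXmin hx).symm ▸ hz
    obtain ⟨y, ⟨t, rfl⟩, hyd⟩ := Metric.mem_closure_iff.1 hzc (ε / 4) (by linarith)
    exact mem_iUnion.2 ⟨t, by simpa [V, dist_comm] using hyd⟩
  obtain ⟨s, hs⟩ := (hXc.prod hXc).elim_finite_subcover V hVopen hcover
  -- Step 2: uniform continuity-type δ over X for the times in s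
  have hcont : ∀ x : M, ∃ δ > 0, ∀ y, dist y x < δ → ∀ t ∈ s, dist (ϕ t y) (ϕ t x) < ε / 8 := by
    intro x
    have : ∀ᶠ y in nhds x, ∀ t ∈ s, dist (ϕ t y) (ϕ t x) < ε / 8 := by
      rw [Finset.eventually_all]
      intro t _
      have hc : ContinuousAt (fun y => dist (ϕ t y) (ϕ t x)) x :=
        ((ϕ.continuous_toFun t).dist continuous_const).continuousAt
      have h0 : dist (ϕ t x) (ϕ t x) < ε / 8 := by simp; linarith
      exact hc.eventually_lt continuousAt_const h0
    exact Metric.eventually_nhds_iff.1 this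
  choose δf hδf0 hδf using hcont
  obtain ⟨x₁, hx₁⟩ := hXmin.1
  obtain ⟨u, hu⟩ := hXc.elim_finite_subcover (fun i : M => Metric.ball i (δf i / 2))
    (fun i => Metric.isOpen_ball) (fun z hz => mem_iUnion.2 ⟨z, by simp [hδf0 z]⟩)
  have hune : u.Nonempty := by
    rcases mem_iUnion₂.1 (hu hx₁) with ⟨i, hi, _⟩
    exact ⟨i, hi⟩
  set δ : ℝ := u.inf' hune fun i => δf i / 2 with hδdef
  have hδpos : 0 < δ := by
    rw [hδdef, Finset.lt_inf'_iff]
    intro i _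
    linarith [hδf0 i]
  have hδkey : ∀ x ∈ X, ∀ y, dist y x < δ → ∀ t ∈ s, dist (ϕ t y) (ϕ t x) < ε / 4 := by
    intro x hxX y hxy t ht
    rcases mem_iUnion₂.1 (hu hxX) with ⟨i, hi, hxi⟩
    have hδle : δ ≤ δf i / 2 := Finset.inf'_le _ hi
    have hxi' : dist x i < δf i / 2 := by simpa using hxi
    have h1 : dist y i < δf i := by
      calc dist y i ≤ dist y x + dist x i := dist_triangle _ _ _
        _ < δ + δf i / 2 := by linarith
        _ ≤ δf i := by linarith
    have h2 : dist (ϕ t y) (ϕ t i) < ε / 8 := hδf i y h1 t ht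
    have h3 : dist (ϕ t x) (ϕ t i) < ε / 8 := hδf i x (by linarith) t ht
    calc dist (ϕ t y) (ϕ t x) ≤ dist (ϕ t y) (ϕ t i) + dist (ϕ t i) (ϕ t x) :=
        dist_triangle _ _ _
      _ < ε / 8 + ε / 8 := by rw [dist_comm (ϕ t i)]; linarith
      _ = ε / 4 := by ring
  -- Step 3: apply the hypothesis with ε' = min δ (ε/2)
  set ε' : ℝ := min δ (ε / 2) with hε'def
  have hε'pos : 0 < ε' := lt_min hδpos (by linarith)
  obtain ⟨Y, hY𝔐, hYne, hYsub⟩ := hd X hX ε' hε'pos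
  refine ⟨Y, hY𝔐, hYne, ?_⟩
  obtain ⟨hYc, hYmin⟩ := hmin Y hY𝔐
  obtain ⟨y₀, hy₀⟩ := hYmin.1
  obtain ⟨x₀, hx₀X, hx₀d⟩ := Metric.mem_thickening_iff.1 (hYsub hy₀)
  have hHd : Metric.hausdorffDist Y X ≤ ε / 2 := by
    apply Metric.hausdorffDist_le_of_mem_dist (by linarith)
    · intro y hy
      obtain ⟨z, hzX, hzd⟩ := Metric.mem_thickening_iff.1 (hYsub hy)
      exact ⟨z, hzX, le_trans hzd.le (min_le_right _ _)⟩
    · intro x hxX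
      have hp : (x₀, x) ∈ ⋃ t ∈ s, V t := hs ⟨hx₀X, hxX⟩
      rcases mem_iUnion₂.1 hp with ⟨t, ht, htd⟩
      have htd' : dist (ϕ t x₀) x < ε / 4 := htd
      have hyd : dist (ϕ t y₀) (ϕ t x₀) < ε / 4 :=
        hδkey x₀ hx₀X y₀ (lt_of_lt_of_le hx₀d (min_le_left _ _)) t ht
      have hmem : ϕ t y₀ ∈ Y := by
        rw [← hYmin.2.2.1 t]
        exact ⟨y₀, hy₀, rfl⟩
      refine ⟨ϕ t y₀, hmem, le_of_lt ?_⟩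
      calc dist x (ϕ t y₀) ≤ dist x (ϕ t x₀) + dist (ϕ t x₀) (ϕ t y₀) := dist_triangle _ _ _
        _ < ε / 4 + ε / 4 := by
            linarith [dist_comm x (ϕ t x₀), dist_comm (ϕ t x₀) (ϕ t y₀)]
        _ = ε / 2 := by ring
  linarith
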